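/- Let F be a field, and suppose C, D ∈ F^{n×n} satisfy: CᵗD is symmetric, and the n×2n matrix (C D) has rank n. Then there exist G ∈ GL_n(O) (for F the fraction field of O, one can take G ∈ GL_n(O)) and W ∈ O^{n×n} such that with (A' B'; C' D') = (A B; C D)·(ᵗG^{-1} W; 0 G) for any completion (A B; C D) to a symplectic matrix, one has det D' = det(CW + DG) ≠ 0. In particular, every symplectic matrix over O can be modified on the right by an element of the integral Siegel parabolic {(ᵗG^{-1} W; 0 G)} so that its lower-right n×n block is invertible. -/

import Mathlib

open Matrix

theorem exists_symm_det_ne_zero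
    (F : Type*) [Field F]
    (n : ℕ) (C D : Matrix (Fin n) (Fin n) F)
    (h1 : (C * Dᵀ).IsSymm)
    (hker : ∀ x : Fin n → F, x ᵥ* C = 0 → x ᵥ* D = 0 → x = 0) :
    ∃ S : Matrix (Fin n) (Fin n) F, S.IsSymm ∧ (C * S + D).det ≠ 0 := by
  classical
  have h1' : D * Cᵀ = C * Dᵀ := by
    have := h1
    rw [Matrix.IsSymm, Matrix.transpose_mul, Matrix.transpose_transpose] at this
    exact this
  set R : Submodule F (Fin n → F) := LinearMap.range C.vecMulLinear with hR
  set m : ℕ := Module.finrank F R with hm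
  let bR : Module.Basis (Fin m) F R := Module.finBasis F R
  have hex : ∀ i : Fin m, ∃ x : Fin n → F, x ᵥ* C = (bR i : Fin n → F) := by
    intro i
    obtain ⟨x, hx⟩ := (bR i).2
    exact ⟨x, hx⟩
  choose Xr hXr using hex
  set X : Matrix (Fin m) (Fin n) F := Matrix.of Xr with hX
  set P : Matrix (Fin m) (Fin n) F := X * C with hP
  have hProw : ∀ i, P i = (bR i : Fin n → F) := by
    intro i
    funext j
    simp only [hP, Matrix.mul_apply]
    rw [← hXr i]
    simp [Matrix.vecMul, dotProduct, hX]
  -- rows of P are linearly independent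
  have hPind : ∀ a : Fin m → F, a ᵥ* P = 0 → a = 0 := by
    intro a ha
    have hli : LinearIndependent F (fun i => (bR i : Fin n → F)) :=
      bR.linearIndependent.map' R.subtype (Submodule.ker_subtype R)
    have hsum : ∑ i, a i • ((bR i : Fin n → F)) = 0 := by
      rw [← ha]
      funext j
      simp [Matrix.vecMul, dotProduct, Finset.sum_apply, hProw, Pi.smul_apply, smul_eq_mul]
    funext i
    exact Fintype.linearIndependent_iff.mp hli a hsum i
  -- a right inverse Q of P
  have hPk : LinearMap.ker P.vecMulLinear = ⊥ := by
    rw [LinearMap.ker_eq_bot']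
    intro a ha
    exact hPind a ha
  obtain ⟨φ, hφ⟩ := LinearMap.exists_leftInverse_of_injective P.vecMulLinear hPk
  set Q : Matrix (Fin n) (Fin m) F := (LinearMap.toMatrix' φ)ᵀ with hQ
  have hQφ : ∀ w : Fin n → F, w ᵥ* Q = φ w := by
    intro w
    rw [hQ, Matrix.vecMul_transpose]
    rw [← Matrix.toLin'_apply (LinearMap.toMatrix' φ), Matrix.toLin'_toMatrix']
  have hPQ : P * Q = 1 := by
    funext i j
    have h5 : (P * Q) i = (P i) ᵥ* Q := by
      funext k
      simp [Matrix.mul_apply, Matrix.vecMul, dotProduct]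
    rw [h5, hQφ]
    have h6 : P i = P.vecMulLinear (Pi.single i 1) := by
      rw [Matrix.vecMulLinear_apply, Matrix.single_one_vecMul]; rfl
    rw [h6]
    have h7 := LinearMap.congr_fun hφ (Pi.single i (1:F))
    simp only [LinearMap.comp_apply, LinearMap.id_apply] at h7
    rw [h7]
    simp [Matrix.one_apply, Pi.single_apply, eq_comm]
  have hQP : Qᵀ * Pᵀ = 1 := by
    rw [← Matrix.transpose_mul, hPQ, Matrix.transpose_one]
  -- the symmetric matrix S
  set B : Matrix (Fin m) (Fin m) F := 1 - X * D * Cᵀ * Xᵀ with hB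
  have hBsymm : Bᵀ = B := by
    rw [hB]
    rw [Matrix.transpose_sub, Matrix.transpose_one]
    congr 1
    rw [Matrix.transpose_mul, Matrix.transpose_mul, Matrix.transpose_mul,
      Matrix.transpose_transpose, Matrix.transpose_transpose]
    calc X * (C * (Dᵀ * Xᵀ)) = X * (C * Dᵀ) * Xᵀ := by simp [Matrix.mul_assoc]
    _ = X * (D * Cᵀ) * Xᵀ := by rw [h1']
    _ = X * D * Cᵀ * Xᵀ := by simp [Matrix.mul_assoc]
  set S : Matrix (Fin n) (Fin n) F := Q * B * Qᵀ with hS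
  have hSsymm : S.IsSymm := by
    rw [Matrix.IsSymm, hS]
    rw [Matrix.transpose_mul, Matrix.transpose_mul, Matrix.transpose_transpose, hBsymm]
    simp [Matrix.mul_assoc]
  have hPSP : P * S * Pᵀ = B := by
    rw [hS]
    calc P * (Q * B * Qᵀ) * Pᵀ = (P * Q) * B * (Qᵀ * Pᵀ) := by simp [Matrix.mul_assoc]
    _ = B := by rw [hPQ, hQP, Matrix.one_mul, Matrix.mul_one]
  refine ⟨S, hSsymm, ?_⟩
  -- trivial left kernel ⇒ det ≠ 0
  intro hdet
  obtain ⟨x, hx0, hx⟩ := Matrix.exists_vecMul_eq_zero_iff.mpr hdet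
  apply hx0
  -- main computation
  have hxCS : x ᵥ* (C * S) = -(x ᵥ* D) := by
    have h8 := hx
    rw [Matrix.vecMul_add] at h8
    rw [add_eq_zero_iff_eq_neg] at h8
    exact h8
  -- xC lies in R; take its coordinates
  have hxCR : x ᵥ* C ∈ R := ⟨x, rfl⟩
  set r : R := ⟨x ᵥ* C, hxCR⟩ with hr
  set av : Fin m → F := fun i => bR.repr r i with hav
  have havP : x ᵥ* C = av ᵥ* P := by
    have h9 : ∑ i, (bR.repr r) i • bR i = r := bR.sum_repr r
    have h10 := congrArg (Subtype.val) h9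
    rw [show ((∑ i, (bR.repr r) i • bR i : R) : Fin n → F)
        = ∑ i, (bR.repr r) i • ((bR i : Fin n → F)) by push_cast; rfl] at h10
    funext j
    rw [show x ᵥ* C = (r : Fin n → F) from rfl, ← h10]
    simp [Matrix.vecMul, dotProduct, hProw, Finset.sum_apply, hav]
  set w : Fin n → F := av ᵥ* X with hw
  have hwC : w ᵥ* C = x ᵥ* C := by
    rw [hw, Matrix.vecMul_vecMul, ← hP, havP]
  -- compute av ᵥ* B in two ways
  have hav1 : av ᵥ* B = -((x ᵥ* D) ᵥ* Pᵀ) := by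
    calc av ᵥ* B = av ᵥ* (P * (S * Pᵀ)) := by rw [← Matrix.mul_assoc, hPSP]
    _ = ((av ᵥ* P) ᵥ* S) ᵥ* Pᵀ := by rw [← Matrix.vecMul_vecMul, ← Matrix.vecMul_vecMul]
    _ = (x ᵥ* (C * S)) ᵥ* Pᵀ := by rw [← havP, Matrix.vecMul_vecMul x C S]
    _ = -((x ᵥ* D) ᵥ* Pᵀ) := by rw [hxCS, Matrix.neg_vecMul]
  have hav2 : av ᵥ* B = av - ((w ᵥ* D) ᵥ* Pᵀ) := by
    rw [hB, Matrix.vecMul_sub, Matrix.vecMul_one]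
    congr 1
    calc av ᵥ* (X * D * Cᵀ * Xᵀ) = av ᵥ* (X * (D * (Cᵀ * Xᵀ))) := by simp [Matrix.mul_assoc]
    _ = ((av ᵥ* X) ᵥ* D) ᵥ* (Cᵀ * Xᵀ) := by rw [← Matrix.vecMul_vecMul, ← Matrix.vecMul_vecMul]
    _ = (w ᵥ* D) ᵥ* Pᵀ := by rw [← hw, hP, Matrix.transpose_mul]
  have hzC : (w - x) ᵥ* C = 0 := by rw [Matrix.sub_vecMul, hwC, sub_self]
  have hzDP : ((w - x) ᵥ* D) ᵥ* Pᵀ = 0 := by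
    have e1 : ((w - x) ᵥ* D) ᵥ* Pᵀ = (w - x) ᵥ* (D * Cᵀ * Xᵀ) := by
      rw [hP, Matrix.transpose_mul, Matrix.vecMul_vecMul, ← Matrix.mul_assoc]
    have e2 : D * Cᵀ * Xᵀ = C * (Dᵀ * Xᵀ) := by rw [h1', Matrix.mul_assoc]
    rw [e1, e2, ← Matrix.vecMul_vecMul, hzC, Matrix.zero_vecMul]
  have hav0 : av = 0 := by
    have h13 : av - ((w ᵥ* D) ᵥ* Pᵀ) = -((x ᵥ* D) ᵥ* Pᵀ) := hav2.symm.trans hav1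
    have h12 : av = ((w ᵥ* D) ᵥ* Pᵀ) - ((x ᵥ* D) ᵥ* Pᵀ) := by
      have h14 := sub_eq_iff_eq_add.mp h13
      rw [h14]; abel
    rw [← Matrix.sub_vecMul, ← Matrix.sub_vecMul, hzDP] at h12
    exact h12
  have hxC0 : x ᵥ* C = 0 := by rw [havP, hav0, Matrix.zero_vecMul]
  have hxD0 : x ᵥ* D = 0 := by
    have h15 : x ᵥ* (C * S) = 0 := by
      rw [← Matrix.vecMul_vecMul, hxC0, Matrix.zero_vecMul]
    rw [h15] at hxCS
    simpa using hxCS.symm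
  exact hker x hxC0 hxD0


/-- Given `C, D` over the fraction field with `C ᵗD` symmetric and `(C D)` of rank `n`,
there are `G ∈ GL_n(O)` and `W ∈ O^{n×n}` (with `W ᵗG` symmetric, so that the Siegel
parabolic element `(ᵗG⁻¹ W; 0 G)` is symplectic) such that `det(CW + DG) ≠ 0`. -/
theorem exists_parabolic_making_lower_right_invertible
    (O : Type*) [CommRing O] [IsDomain O] [IsDedekindDomain O]
    (F : Type*) [Field F] [Algebra O F] [IsFractionRing O F]
    (n : ℕ) (C D : Matrix (Fin n) (Fin n) F)
    (h1 : (C * Dᵀ).IsSymm)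
    (h2 : (Matrix.of fun (i : Fin n) (j : Fin n ⊕ Fin n) => Sum.elim (C i) (D i) j).rank = n) :
    ∃ (G W : Matrix (Fin n) (Fin n) O),
      IsUnit G.det ∧ (W * Gᵀ).IsSymm ∧
        (C * W.map (algebraMap O F) + D * G.map (algebraMap O F)).det ≠ 0 := by
  classical
  have hinj : Function.Injective (algebraMap O F) := IsFractionRing.injective O F
  have hker : ∀ x : Fin n → F, x ᵥ* C = 0 → x ᵥ* D = 0 → x = 0 := by
    intro x hc hd
    set M0 : Matrix (Fin n) (Fin n ⊕ Fin n) F :=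
      Matrix.of fun i j => Sum.elim (C i) (D i) j with hM0
    have hrT : M0ᵀ.rank = n := by rw [Matrix.rank_transpose]; exact h2
    have hk : LinearMap.ker (M0ᵀ.mulVecLin) = ⊥ := by
      have h3 := LinearMap.finrank_range_add_finrank_ker (M0ᵀ.mulVecLin)
      have h4 : Module.finrank F (LinearMap.range M0ᵀ.mulVecLin) = n := hrT
      rw [h4, Module.finrank_pi, Fintype.card_fin] at h3
      have h5 : Module.finrank F (LinearMap.ker M0ᵀ.mulVecLin) = 0 := by omega
      exact Submodule.finrank_eq_zero.mp h5
    have hx : M0ᵀ.mulVecLin x = 0 := by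
      rw [Matrix.mulVecLin_apply, Matrix.mulVec_transpose]
      funext j
      cases j with
      | inl j => simpa [hM0, Matrix.vecMul, dotProduct] using congrFun hc j
      | inr j => simpa [hM0, Matrix.vecMul, dotProduct] using congrFun hd j
    have h6 : x ∈ LinearMap.ker (M0ᵀ.mulVecLin) := LinearMap.mem_ker.mpr hx
    rw [hk] at h6
    simpa using h6
  obtain ⟨S, hSsymm, hSdet⟩ := exists_symm_det_ne_zero F n C D h1 hker
  by_cases hfin : Finite O
  · -- O is a finite domain, hence a field: algebraMap O F is surjective
    have hfield : IsField O := Finite.isField_of_domain O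
    have hsurj : Function.Surjective (algebraMap O F) := by
      intro z
      obtain ⟨a, b, hb, hab⟩ := IsFractionRing.div_surjective (A := O) z
      obtain ⟨c, hc⟩ := hfield.mul_inv_cancel (nonZeroDivisors.ne_zero hb)
      refine ⟨a * c, ?_⟩
      have hbc : algebraMap O F b * algebraMap O F c = 1 := by
        rw [← _root_.map_mul, hc, _root_.map_one]
      calc algebraMap O F (a * c) = algebraMap O F a * algebraMap O F c := map_mul _ _ _
      _ = algebraMap O F a * (algebraMap O F b)⁻¹ := by
            rw [inv_eq_of_mul_eq_one_right hbc]
      _ = algebraMap O F a / algebraMap O F b := (div_eq_mul_inv _ _).symm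
      _ = z := hab
    have hex : ∀ i j, ∃ a : O, algebraMap O F a = S i j := fun i j => hsurj _
    choose w hw using hex
    set W : Matrix (Fin n) (Fin n) O := Matrix.of w with hWdef
    have hWmap : W.map (algebraMap O F) = S := by
      ext i j
      simp [Matrix.map_apply, hWdef, hw]
    refine ⟨1, W, by rw [Matrix.det_one]; exact isUnit_one, ?_, ?_⟩
    · rw [Matrix.transpose_one, Matrix.mul_one]
      apply Matrix.ext; intro i j
      apply hinj
      show algebraMap O F (Wᵀ i j) = algebraMap O F (W i j)
      rw [Matrix.transpose_apply]
      show algebraMap O F (w j i) = algebraMap O F (w i j)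
      rw [hw, hw]
      exact congrFun (congrFun hSsymm i) j
    · rw [hWmap, Matrix.map_one _ (map_zero _) (map_one _), Matrix.mul_one]
      exact hSdet
  · have : Infinite O := not_finite_iff_infinite.mp hfin
    obtain ⟨b, hb⟩ := IsLocalization.exist_integer_multiples (nonZeroDivisors O)
      Finset.univ (fun p : Fin n × Fin n => S p.1 p.2)
    have hbS : ∀ i j, ∃ a : O, algebraMap O F a = (b : O) • S i j := by
      intro i j
      exact hb (i, j) (Finset.mem_univ _)
    choose w hw using hbS
    -- the polynomial t ↦ det (t • (C*S) + D)
    set p : Polynomial F :=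
      ((C * S).map (fun a => Polynomial.C a * Polynomial.X) + D.map Polynomial.C).det with hpdef
    have heval : ∀ t : F, p.eval t = (t • (C * S) + D).det := by
      intro t
      have h7 := RingHom.map_det (Polynomial.evalRingHom t)
        ((C * S).map (fun a => Polynomial.C a * Polynomial.X) + D.map Polynomial.C)
      have h8 : (Polynomial.evalRingHom t).mapMatrix
          ((C * S).map (fun a => Polynomial.C a * Polynomial.X) + D.map Polynomial.C)
          = t • (C * S) + D := by
        ext i j
        simp only [RingHom.mapMatrix_apply, Matrix.map_apply, Matrix.add_apply,
          Matrix.smul_apply, Polynomial.coe_evalRingHom, Polynomial.eval_add,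
          Polynomial.eval_mul, Polynomial.eval_C, Polynomial.eval_X, smul_eq_mul]
        ring
      rw [hpdef]
      show (Polynomial.evalRingHom t) _ = _
      rw [h7, h8]
    have hp1 : p.eval 1 ≠ 0 := by
      rw [heval]
      simpa using hSdet
    have hpne : p ≠ 0 := fun h => hp1 (by rw [h]; simp)
    have hroots : {t : F | p.IsRoot t}.Finite := Polynomial.finite_setOf_isRoot hpne
    set ι : O → F := fun c => algebraMap O F (c * (b : O)) with hι
    have hιinj : Function.Injective ι := by
      intro c1 c2 hcc
      have h9 : c1 * (b : O) = c2 * (b : O) := hinj hcc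
      exact mul_right_cancel₀ (nonZeroDivisors.ne_zero b.2) h9
    have hfin2 : (ι ⁻¹' {t | p.IsRoot t}).Finite :=
      hroots.preimage hιinj.injOn
    obtain ⟨c, hc⟩ := hfin2.infinite_compl.nonempty
    have hcroot : ¬ p.IsRoot (ι c) := hc
    set W : Matrix (Fin n) (Fin n) O := Matrix.of fun i j => c * w i j with hWdef
    have hWmap : W.map (algebraMap O F) = ι c • S := by
      ext i j
      show algebraMap O F (c * w i j) = ι c * S i j
      rw [_root_.map_mul, hw, Algebra.smul_def]
      show algebraMap O F c * (algebraMap O F (b : O) * S i j)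
        = algebraMap O F (c * (b : O)) * S i j
      rw [_root_.map_mul]
      ring
    refine ⟨1, W, by rw [Matrix.det_one]; exact isUnit_one, ?_, ?_⟩
    · rw [Matrix.transpose_one, Matrix.mul_one]
      apply Matrix.ext; intro i j
      apply hinj
      show algebraMap O F (Wᵀ i j) = algebraMap O F (W i j)
      rw [Matrix.transpose_apply]
      show algebraMap O F (c * w j i) = algebraMap O F (c * w i j)
      rw [_root_.map_mul, _root_.map_mul, hw, hw, Algebra.smul_def, Algebra.smul_def]
      have h10 : S j i = S i j := congrFun (congrFun hSsymm i) j
      rw [h10]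
    · rw [hWmap, Matrix.map_one _ (map_zero _) (map_one _), Matrix.mul_one]
      rw [Matrix.mul_smul]
      intro hzero
      exact hcroot (by rw [Polynomial.IsRoot, heval]; exact hzero)
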